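/- arXiv:2208.13875 — 2 statements merged into one kernel-verified Lean document; each statement's English description precedes it below -/
import Mathlib

section
/- If ψ̄(r,t) solves ∂ₜψ̄ = ψ̄_rr + (5/r)ψ̄_r + (6 - 2r²ψ̄)ψ̄², then so does the function 2/r² - ψ̄(r,t). -/
open Set

private lemma hasDerivAt_two_div_sq (x : ℝ) (hx : x ≠ 0) :
    HasDerivAt (fun ρ : ℝ => 2 / ρ ^ 2) (-4 / x ^ 3) x := by
  have h := ((hasDerivAt_pow 2 x).fun_inv (pow_ne_zero 2 hx)).const_mul (2 : ℝ)
  have heq : (fun ρ : ℝ => 2 / ρ ^ 2) = fun ρ : ℝ => 2 * (ρ ^ 2)⁻¹ := by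
    funext ρ; rw [div_eq_mul_inv]
  rw [heq]
  refine h.congr_deriv ?_
  field_simp
  ring

private lemma hasDerivAt_neg_four_div_cube (x : ℝ) (hx : x ≠ 0) :
    HasDerivAt (fun ρ : ℝ => -4 / ρ ^ 3) (12 / x ^ 4) x := by
  have h := ((hasDerivAt_pow 3 x).fun_inv (pow_ne_zero 3 hx)).const_mul (-4 : ℝ)
  have heq : (fun ρ : ℝ => -4 / ρ ^ 3) = fun ρ : ℝ => -4 * (ρ ^ 3)⁻¹ := by
    funext ρ; rw [div_eq_mul_inv]
  rw [heq]
  refine h.congr_deriv ?_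
  field_simp
  ring

/-- If ψ̄ solves ∂ₜψ̄ = ψ̄_rr + (5/r)ψ̄_r + (6 - 2r²ψ̄)ψ̄² on (0,∞)×(0,T), then so does
the function 2/r² - ψ̄. -/
theorem reflection_solution (T : ℝ) (ψ : ℝ → ℝ → ℝ)
    (hreg : ContDiffOn ℝ 2 (fun p : ℝ × ℝ => ψ p.1 p.2) (Ioi 0 ×ˢ Ioo 0 T))
    (heq : ∀ r ∈ Ioi (0 : ℝ), ∀ t ∈ Ioo (0 : ℝ) T,
      deriv (fun s => ψ r s) t
        = deriv (deriv (fun ρ => ψ ρ t)) r + (5 / r) * deriv (fun ρ => ψ ρ t) r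
          + (6 - 2 * r ^ 2 * ψ r t) * (ψ r t) ^ 2) :
    ∀ r ∈ Ioi (0 : ℝ), ∀ t ∈ Ioo (0 : ℝ) T,
      deriv (fun s => 2 / r ^ 2 - ψ r s) t
        = deriv (deriv (fun ρ => 2 / ρ ^ 2 - ψ ρ t)) r
          + (5 / r) * deriv (fun ρ => 2 / ρ ^ 2 - ψ ρ t) r
          + (6 - 2 * r ^ 2 * (2 / r ^ 2 - ψ r t)) * (2 / r ^ 2 - ψ r t) ^ 2 := by
  intro r hr t ht
  have hr0 : (0 : ℝ) < r := hr
  have hrne : r ≠ 0 := ne_of_gt hr0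
  -- spatial slice is C²
  have hφ : ContDiffOn ℝ 2 (fun ρ => ψ ρ t) (Ioi 0) := by
    have hmap : ContDiffOn ℝ 2 (fun ρ : ℝ => (ρ, t)) (Ioi 0) :=
      (contDiff_id.prodMk contDiff_const).contDiffOn
    exact hreg.comp hmap (fun ρ hρ => ⟨hρ, ht⟩)
  have hφdiff : ∀ ρ ∈ Ioi (0 : ℝ), DifferentiableAt ℝ (fun ρ => ψ ρ t) ρ := by
    intro ρ hρ
    exact (hφ.differentiableOn (by norm_num)).differentiableAt (isOpen_Ioi.mem_nhds hρ)
  have hφ' : ContDiffOn ℝ 1 (deriv (fun ρ => ψ ρ t)) (Ioi 0) :=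
    hφ.deriv_of_isOpen isOpen_Ioi (by norm_num)
  have hφ'diff : DifferentiableAt ℝ (deriv (fun ρ => ψ ρ t)) r :=
    (hφ'.differentiableOn (by norm_num)).differentiableAt (isOpen_Ioi.mem_nhds hr)
  -- time derivative
  have hDt : deriv (fun s => 2 / r ^ 2 - ψ r s) t = -deriv (fun s => ψ r s) t :=
    deriv_const_sub _
  -- first spatial derivative on Ioi 0
  have hF' : ∀ ρ ∈ Ioi (0 : ℝ),
      deriv (fun ρ => 2 / ρ ^ 2 - ψ ρ t) ρ = -4 / ρ ^ 3 - deriv (fun ρ => ψ ρ t) ρ := by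
    intro ρ hρ
    have h1 := hasDerivAt_two_div_sq ρ (ne_of_gt hρ)
    rw [deriv_fun_sub h1.differentiableAt (hφdiff ρ hρ), h1.deriv]
  -- second spatial derivative
  have hEE : deriv (fun ρ => 2 / ρ ^ 2 - ψ ρ t)
      =ᶠ[nhds r] fun ρ => -4 / ρ ^ 3 - deriv (fun ρ => ψ ρ t) ρ := by
    filter_upwards [isOpen_Ioi.mem_nhds hr] with ρ hρ using hF' ρ hρ
  have hD2 : deriv (deriv (fun ρ => 2 / ρ ^ 2 - ψ ρ t)) r
      = 12 / r ^ 4 - deriv (deriv (fun ρ => ψ ρ t)) r := by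
    rw [hEE.deriv_eq]
    have h1 := hasDerivAt_neg_four_div_cube r hrne
    rw [deriv_fun_sub h1.differentiableAt hφ'diff, h1.deriv]
  rw [hDt, hD2, hF' r hr, heq r hr t ht]
  field_simp
  ring
end

section
/- Let κ₀ > 0 and μ(t) = e^{-κ₀t}. Under the change of variables ŝ = √(t-s̃)/μ(s̃), one has ds̃ = -μ(s̃)/((1/2)(t-s̃)^{-1/2} + μ'(s̃)ŝ) dŝ, and for any continuous Ω ≥ 0 with ∫₀^∞ ŝ⁻³ Ω(ŝ⁻²) dŝ < ∞, lim_{δ→0⁺, t→∞} ∫_{t-δ}^t (μ(s̃)μ'(s̃)/(t-s̃)²) Ω(μ(s̃)²/(t-s̃)) ds̃ = -2κ₀ ∫₀^∞ ŝ⁻³ Ω(ŝ⁻²) dŝ in the sense that the integral equals -2κ₀(∫₀^{√δ/μ(t-δ)} ŝ⁻³Ω(ŝ⁻²)dŝ + o(1)) as δκ₀ → 0 and √δ/μ(t-δ) → ∞. -/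
open MeasureTheory Set

lemma aux_deriv (κ₀ t s : ℝ) (hst : s < t) :
    HasDerivAt (fun u => Real.sqrt (t - u) * Real.exp (κ₀ * u))
      (1 / (2 * Real.sqrt (t - s)) * (-1) * Real.exp (κ₀ * s)
        + Real.sqrt (t - s) * (Real.exp (κ₀ * s) * κ₀)) s := by
  have h1 : HasDerivAt (fun u : ℝ => t - u) (-1) s := by
    simpa using (hasDerivAt_id s).const_sub t
  have h2 : HasDerivAt (fun u : ℝ => Real.sqrt (t - u))
      (1 / (2 * Real.sqrt (t - s)) * (-1)) s := by
    have := (Real.hasDerivAt_sqrt (x := t - s) (sub_ne_zero.2 hst.ne')).comp s h1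
    simpa [Function.comp_def] using this
  have h3 : HasDerivAt (fun u : ℝ => Real.exp (κ₀ * u)) (Real.exp (κ₀ * s) * κ₀) s := by
    have h3' : HasDerivAt (fun u : ℝ => κ₀ * u) κ₀ s := by
      simpa using (hasDerivAt_id s).const_mul κ₀
    have := (Real.hasDerivAt_exp (κ₀ * s)).comp s h3'
    simpa [Function.comp_def] using this
  exact h2.mul h3


/-- Change-of-variables computation fixing the blow-up rate: with μ(t) = e^{-κ₀t},
the map s ↦ √(t-s)/μ(s) has derivative -((1/2)(t-s)^{-1/2} + μ'(s)·ŝ)/μ(s), and the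
near-field integral ∫_{t-δ}^t (μμ'/(t-s)²)Ω(μ²/(t-s))ds equals
-2κ₀(∫₀^{√δ/μ(t-δ)} ŝ⁻³Ω(ŝ⁻²)dŝ + o(1)) as δκ₀ → 0 and √δ/μ(t-δ) → ∞. -/
theorem blowup_rate_change_of_variables (κ₀ : ℝ) (hκ : 0 < κ₀)
    (μ : ℝ → ℝ) (hμ : ∀ t, μ t = Real.exp (-κ₀ * t))
    (Ω : ℝ → ℝ) (hΩc : Continuous Ω) (hΩ0 : ∀ τ, 0 ≤ Ω τ)
    (hΩint : IntegrableOn (fun u : ℝ => u ^ (-3 : ℝ) * Ω (u ^ (-2 : ℝ))) (Ioi 0)) :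
    (∀ t s : ℝ, s < t →
      HasDerivAt (fun u => Real.sqrt (t - u) / μ u)
        (-((1 / 2) * (t - s) ^ (-(1 / 2) : ℝ)
            + (-κ₀ * μ s) * (Real.sqrt (t - s) / μ s)) / μ s) s) ∧
    (∀ ε > 0, ∃ δ₀ > 0, ∃ A : ℝ, ∀ δ : ℝ, 0 < δ → δ < δ₀ → ∀ t : ℝ,
      A ≤ Real.sqrt δ / μ (t - δ) →
      |(∫ s in (t - δ)..t, μ s * (-κ₀ * μ s) / (t - s) ^ 2 * Ω ((μ s) ^ 2 / (t - s)))
          + 2 * κ₀ *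
            ∫ u in (0 : ℝ)..(Real.sqrt δ / μ (t - δ)), u ^ (-3 : ℝ) * Ω (u ^ (-2 : ℝ))|
        ≤ 2 * κ₀ * ε) := by
  have hμpos : ∀ x, 0 < μ x := fun x => by rw [hμ]; exact Real.exp_pos _
  have hexpinv : ∀ x : ℝ, Real.exp (κ₀ * x) = (μ x)⁻¹ := fun x => by
    rw [hμ, neg_mul, Real.exp_neg, inv_inv]
  constructor
  · intro t s hst
    have hfun : (fun u => Real.sqrt (t - u) / μ u)
        = fun u => Real.sqrt (t - u) * Real.exp (κ₀ * u) := by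
      funext u; rw [hexpinv, div_eq_mul_inv]
    rw [hfun]
    convert aux_deriv κ₀ t s hst using 1
    have hts : (0:ℝ) < t - s := sub_pos.2 hst
    have hsq : Real.sqrt (t - s) ≠ 0 := (Real.sqrt_pos.2 hts).ne'
    have hrpow : (t - s) ^ (-(1/2) : ℝ) = (Real.sqrt (t - s))⁻¹ := by
      rw [Real.rpow_neg hts.le, ← Real.sqrt_eq_rpow]
    rw [hrpow, hexpinv s]
    have hμs : μ s ≠ 0 := (hμpos s).ne'
    field_simp
    ring
  have hμpos : ∀ x, 0 < μ x := fun x => by rw [hμ]; exact Real.exp_pos _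
  have hexpinv : ∀ x : ℝ, Real.exp (κ₀ * x) = (μ x)⁻¹ := fun x => by
    rw [hμ, neg_mul, Real.exp_neg, inv_inv]
  intro ε hε
  set g : ℝ → ℝ := fun u => u ^ (-3 : ℝ) * Ω (u ^ (-2 : ℝ)) with hgdef
  have hgnn : ∀ u ∈ Ioi (0:ℝ), 0 ≤ g u := fun u hu =>
    mul_nonneg (Real.rpow_nonneg (le_of_lt hu) _) (hΩ0 _)
  set C : ℝ := ∫ u in Ioi (0:ℝ), g u with hCdef
  have hC0 : 0 ≤ C := setIntegral_nonneg measurableSet_Ioi hgnn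
  refine ⟨min (1/(4*κ₀)) (ε/(4*κ₀*(C+1))),
    lt_min (by positivity) (by positivity), 0, ?_⟩
  intro δ hδ hδ0 t _
  have hδ1 : κ₀ * δ < 1/4 := by
    have h := lt_of_lt_of_le hδ0 (min_le_left _ _)
    rw [lt_div_iff₀ (by positivity)] at h; linarith
  have hδ2 : δ * (4*κ₀*(C+1)) < ε := by
    have h := lt_of_lt_of_le hδ0 (min_le_right _ _)
    rw [lt_div_iff₀ (by positivity)] at h; linarith
  set a := t - δ with hadef
  have hat : a < t := by rw [hadef]; linarith
  set f : ℝ → ℝ := fun s => Real.sqrt (t - s) * Real.exp (κ₀ * s) with hfdef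
  set f' : ℝ → ℝ := fun s => 1/(2*Real.sqrt (t - s)) * (-1) * Real.exp (κ₀*s)
      + Real.sqrt (t - s) * (Real.exp (κ₀*s)*κ₀) with hf'def
  have hfc : Continuous f := by
    rw [hfdef]
    exact (Real.continuous_sqrt.comp (continuous_const.sub continuous_id)).mul
      (Real.continuous_exp.comp (continuous_const.mul continuous_id))
  have hderiv : ∀ x ∈ Ioo a t, HasDerivAt f (f' x) x := fun x hx =>
    aux_deriv κ₀ t x hx.2
  -- basic facts on Ioo a t
  have hfacts : ∀ x ∈ Ioo a t, 0 < t - x ∧ t - x < δ := by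
    intro x hx
    rcases hx with ⟨h1, h2⟩
    constructor <;> [linarith; (rw [hadef] at h1; linarith)]
  -- f' in closed form
  have hf'eq : ∀ x ∈ Ioo a t,
      f' x = (κ₀ * (t - x) - 1/2) * (Real.exp (κ₀*x) / Real.sqrt (t - x)) := by
    intro x hx
    obtain ⟨hr, _⟩ := hfacts x hx
    have hsq : 0 < Real.sqrt (t - x) := Real.sqrt_pos.2 hr
    have hms : Real.sqrt (t - x) * Real.sqrt (t - x) = t - x := Real.mul_self_sqrt hr.le
    rw [hf'def]
    field_simp
    linear_combination (2*κ₀) * hms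
  have hf'neg : ∀ x ∈ Ioo a t, f' x < 0 := by
    intro x hx
    obtain ⟨hr, hrδ⟩ := hfacts x hx
    rw [hf'eq x hx]
    have hsq : 0 < Real.sqrt (t - x) := Real.sqrt_pos.2 hr
    have : κ₀ * (t - x) - 1/2 < 0 := by nlinarith
    exact mul_neg_of_neg_of_pos this (by positivity)
  have hanti : StrictAntiOn f (Icc a t) := by
    apply strictAntiOn_of_deriv_neg (convex_Icc a t) hfc.continuousOn
    intro x hx
    rw [interior_Icc] at hx
    rw [(hderiv x hx).deriv]
    exact hf'neg x hx
  have hinj : InjOn f (Ioo a t) := (hanti.injOn).mono Ioo_subset_Icc_self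
  have hft : f t = 0 := by rw [hfdef]; simp
  set U := Real.sqrt δ / μ (t - δ) with hUdef
  have hUf : U = f a := by
    rw [hUdef, hfdef]
    simp only
    rw [show t - a = δ by rw [hadef]; ring, hexpinv, div_eq_mul_inv, hadef]
  have hU0 : 0 < U := div_pos (Real.sqrt_pos.2 hδ) (hμpos _)
  have himg : f '' Ioo a t = Ioo 0 U := by
    apply Subset.antisymm
    · rintro _ ⟨x, hx, rfl⟩
      have hx' : x ∈ Icc a t := Ioo_subset_Icc_self hx
      constructor
      · have := hanti hx' (right_mem_Icc.2 hat.le) hx.2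
        rwa [hft] at this
      · rw [hUf]
        exact hanti (left_mem_Icc.2 hat.le) hx' hx.1
    · rw [hUf, ← hft]
      exact intermediate_value_Ioo' hat.le hfc.continuousOn
  have hcov : ∫ u in Ioo (0:ℝ) U, g u = ∫ x in Ioo a t, |f' x| * g (f x) := by
    rw [← himg]
    simpa [smul_eq_mul] using integral_image_eq_integral_abs_deriv_smul
      measurableSet_Ioo (fun x hx => (hderiv x hx).hasDerivWithinAt) hinj g
  have hPint : IntegrableOn (fun x => |f' x| * g (f x)) (Ioo a t) := by
    have h := (integrableOn_image_iff_integrableOn_abs_deriv_smul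
      measurableSet_Ioo (fun x hx => (hderiv x hx).hasDerivWithinAt) hinj g).1
      (by rw [himg]; exact hΩint.mono_set (fun u hu => hu.1))
    simpa [smul_eq_mul] using h
  -- the key pointwise identity
  have hkey : ∀ x ∈ Ioo a t, |f' x| * g (f x)
      = (1/2 - κ₀*(t-x)) * ((μ x)^2/(t-x)^2 * Ω ((μ x)^2/(t-x))) := by
    intro x hx
    obtain ⟨hr, hrδ⟩ := hfacts x hx
    have hsq : 0 < Real.sqrt (t - x) := Real.sqrt_pos.2 hr
    have hms : Real.sqrt (t - x) * Real.sqrt (t - x) = t - x := Real.mul_self_sqrt hr.le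
    have hμx : 0 < μ x := hμpos x
    have hfx : 0 < f x := by rw [hfdef]; positivity
    have habs : |f' x| = (1/2 - κ₀*(t-x)) * (Real.exp (κ₀*x) / Real.sqrt (t - x)) := by
      rw [abs_of_neg (hf'neg x hx), hf'eq x hx]; ring
    have hfx2 : (f x) ^ (-2:ℝ) = (μ x)^2/(t-x) := by
      rw [show (-2:ℝ) = -((2:ℕ):ℝ) by norm_num, Real.rpow_neg hfx.le, Real.rpow_natCast,
        hfdef]
      simp only
      rw [mul_pow, Real.sq_sqrt hr.le, hexpinv]
      field_simp
    have hfx3 : (f x) ^ (-3:ℝ) = (μ x)^3/(Real.sqrt (t-x))^3 := by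
      rw [show (-3:ℝ) = -((3:ℕ):ℝ) by norm_num, Real.rpow_neg hfx.le, Real.rpow_natCast,
        hfdef]
      simp only
      rw [mul_pow, hexpinv]
      field_simp
    rw [hgdef]
    simp only
    rw [habs, hfx2, hfx3, hexpinv]
    have h4 : Real.sqrt (t-x) ^ 4 = (t-x)^2 := by
      rw [show (4:ℕ) = 2*2 by norm_num, pow_mul, Real.sq_sqrt hr.le]
    field_simp
    linear_combination (-((1 - 2*κ₀*(t-x)) * Ω (μ x^2/(t-x)))) * h4
  -- the error term Q
  set Q : ℝ → ℝ := fun x => (μ x)^2/(t-x) * Ω ((μ x)^2/(t-x)) with hQdef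
  have hQnn : ∀ x ∈ Ioo a t, 0 ≤ Q x := by
    intro x hx
    obtain ⟨hr, _⟩ := hfacts x hx
    exact mul_nonneg (by positivity) (hΩ0 _)
  have hQP : ∀ x ∈ Ioo a t, Q x ≤ 4*δ*(|f' x| * g (f x)) := by
    intro x hx
    obtain ⟨hr, hrδ⟩ := hfacts x hx
    rw [hkey x hx, hQdef]
    simp only
    have hnn : 0 ≤ (μ x)^2/(t-x)^2 * Ω ((μ x)^2/(t-x)) :=
      mul_nonneg (by positivity) (hΩ0 _)
    have hQx : (μ x)^2/(t-x) * Ω ((μ x)^2/(t-x))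
        = (t-x) * ((μ x)^2/(t-x)^2 * Ω ((μ x)^2/(t-x))) := by
      field_simp
    rw [hQx]
    have hcoef : (t - x) ≤ 4*δ*(1/2 - κ₀*(t-x)) := by nlinarith
    calc (t-x) * ((μ x)^2/(t-x)^2 * Ω ((μ x)^2/(t-x)))
        ≤ (4*δ*(1/2 - κ₀*(t-x))) * ((μ x)^2/(t-x)^2 * Ω ((μ x)^2/(t-x))) :=
          mul_le_mul_of_nonneg_right hcoef hnn
      _ = 4*δ*((1/2 - κ₀*(t-x)) * ((μ x)^2/(t-x)^2 * Ω ((μ x)^2/(t-x)))) := by ring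
  have hμc : Continuous μ := by
    have : μ = fun x => Real.exp (-κ₀*x) := funext hμ
    rw [this]
    exact Real.continuous_exp.comp (continuous_const.mul continuous_id)
  have hQcont : ContinuousOn Q (Ioo a t) := by
    have hbase : ContinuousOn (fun x => (μ x)^2/(t-x)) (Ioo a t) := by
      apply ContinuousOn.div ((hμc.pow 2).continuousOn)
        ((continuous_const.sub continuous_id).continuousOn)
      intro x hx
      exact (sub_pos.2 hx.2).ne'
    exact hbase.mul (hΩc.comp_continuousOn hbase)
  have hQint : IntegrableOn Q (Ioo a t) := by
    apply Integrable.mono' (hPint.const_mul (4*δ))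
      (hQcont.aestronglyMeasurable measurableSet_Ioo)
    refine (ae_restrict_iff' measurableSet_Ioo).2 (ae_of_all _ fun x hx => ?_)
    rw [Real.norm_eq_abs, abs_of_nonneg (hQnn x hx)]
    exact hQP x hx
  have hQI1 : ∫ x in Ioo a t, Q x ≤ 4*δ*C := by
    calc ∫ x in Ioo a t, Q x ≤ ∫ x in Ioo a t, 4*δ*(|f' x| * g (f x)) :=
          setIntegral_mono_on hQint (hPint.const_mul _) measurableSet_Ioo hQP
      _ = 4*δ * ∫ x in Ioo a t, |f' x| * g (f x) := integral_const_mul _ _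
      _ = 4*δ * ∫ u in Ioo (0:ℝ) U, g u := by rw [hcov]
      _ ≤ 4*δ*C := by
          apply mul_le_mul_of_nonneg_left _ (by positivity)
          rw [hCdef]
          exact setIntegral_mono_set hΩint
            ((ae_restrict_iff' measurableSet_Ioi).2 (ae_of_all _ hgnn))
            (HasSubset.Subset.eventuallyLE (fun u hu => hu.1))
  have hQI0 : 0 ≤ ∫ x in Ioo a t, Q x := setIntegral_nonneg measurableSet_Ioo hQnn
  -- main integrand identity
  have hmain : ∀ x ∈ Ioo a t,
      μ x * (-κ₀ * μ x) / (t - x) ^ 2 * Ω ((μ x) ^ 2 / (t - x))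
        = (-(2*κ₀)) * (|f' x| * g (f x)) - 2*κ₀^2 * Q x := by
    intro x hx
    obtain ⟨hr, _⟩ := hfacts x hx
    rw [hkey x hx, hQdef]
    simp only
    field_simp
    ring
  -- rewrite the interval integrals
  have hI1 : (∫ s in (t - δ)..t, μ s * (-κ₀ * μ s) / (t - s) ^ 2 * Ω ((μ s) ^ 2 / (t - s)))
      = ∫ x in Ioo a t, μ x * (-κ₀ * μ x) / (t - x) ^ 2 * Ω ((μ x) ^ 2 / (t - x)) := by
    rw [intervalIntegral.integral_of_le (by linarith : t - δ ≤ t), ← hadef,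
      integral_Ioc_eq_integral_Ioo]
  have hI2 : (∫ u in (0:ℝ)..U, g u) = ∫ u in Ioo (0:ℝ) U, g u := by
    rw [intervalIntegral.integral_of_le hU0.le, integral_Ioc_eq_integral_Ioo]
  have hsplit : (∫ x in Ioo a t, μ x * (-κ₀ * μ x) / (t - x) ^ 2 * Ω ((μ x) ^ 2 / (t - x)))
      = (-(2*κ₀)) * (∫ x in Ioo a t, |f' x| * g (f x)) - 2*κ₀^2 * ∫ x in Ioo a t, Q x := by
    rw [setIntegral_congr_fun measurableSet_Ioo hmain,
      integral_sub ((hPint.const_mul _)) (hQint.const_mul _),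
      integral_const_mul, integral_const_mul]
  rw [hI1, hI2, hsplit, hcov]
  have hval : (-(2*κ₀)) * (∫ x in Ioo a t, |f' x| * g (f x))
        - 2*κ₀^2 * (∫ x in Ioo a t, Q x)
        + 2 * κ₀ * (∫ x in Ioo a t, |f' x| * g (f x))
      = -(2*κ₀^2 * ∫ x in Ioo a t, Q x) := by ring
  rw [hval, abs_neg, abs_of_nonneg (by positivity)]
  nlinarith [mul_le_mul_of_nonneg_left hQI1 (le_of_lt (mul_pos (mul_pos two_pos hκ) hκ)),
    mul_pos hκ hδ, mul_nonneg hκ.le hC0]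
end
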